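/- Let f(t) = t² on [-1/2,1/2] and let ε > 0 satisfy ε² ≤ 1/480. Then ω(ε, f, F_c) = (15^{2/5}/2) ε^{4/5}. -/

import Mathlib

open MeasureTheory

/-- The local modulus of continuity of `f` at `0` over the class of convex
functions on `[-1/2, 1/2]`. -/
noncomputable def omegaConvex (ε : ℝ) (f : ℝ → ℝ) : ℝ :=
  sSup {d : ℝ | ∃ g : ℝ → ℝ, ConvexOn ℝ (Set.Icc (-(1:ℝ)/2) (1/2)) g ∧
    (∫ t in (-(1:ℝ)/2)..(1/2), (g t - f t)^2) ≤ ε^2 ∧ d = |g 0 - f 0|}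


open MeasureTheory Set

section Helpers

/-- convex functions on the interval are bounded -/
lemma convex_abs_bound {g : ℝ → ℝ} (hg : ConvexOn ℝ (Icc (-(1:ℝ)/2) (1/2)) g) :
    ∃ C : ℝ, ∀ t ∈ Icc (-(1:ℝ)/2) (1/2), |g t| ≤ C := by
  have hmem : ∀ t ∈ Icc (-(1:ℝ)/2) (1/2), g t ≤ max (g (-(1:ℝ)/2)) (g (1/2)) := by
    intro t ht
    rw [mem_Icc] at ht
    have h1 : (0:ℝ) ≤ 1/2 - t := by linarith [ht.2]
    have h2 : (0:ℝ) ≤ t + 1/2 := by linarith [ht.1]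
    have := hg.2 (by norm_num : (-(1:ℝ)/2) ∈ Icc (-(1:ℝ)/2) (1/2))
      (by norm_num : (1:ℝ)/2 ∈ Icc (-(1:ℝ)/2) (1/2)) h1 h2 (by ring)
    simp only [smul_eq_mul] at this
    have ht' : (1/2 - t) * (-(1:ℝ)/2) + (t + 1/2) * (1/2) = t := by ring
    rw [ht'] at this
    calc g t ≤ (1/2 - t) * g (-(1:ℝ)/2) + (t + 1/2) * g (1/2) := this
      _ ≤ (1/2 - t) * max (g (-(1:ℝ)/2)) (g (1/2)) + (t + 1/2) * max (g (-(1:ℝ)/2)) (g (1/2)) := by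
          gcongr
          · exact le_max_left _ _
          · exact le_max_right _ _
      _ = max (g (-(1:ℝ)/2)) (g (1/2)) := by ring
  refine ⟨max (g (-(1:ℝ)/2)) (g (1/2)) + |2 * g 0 - max (g (-(1:ℝ)/2)) (g (1/2))| + |max (g (-(1:ℝ)/2)) (g (1/2))|, ?_⟩
  intro t ht
  have htm : -t ∈ Icc (-(1:ℝ)/2) (1/2) := by
    rw [mem_Icc] at ht ⊢; constructor <;> linarith [ht.1, ht.2]
  have hup := hmem t ht
  have hup' := hmem (-t) htm
  have hmid : g 0 ≤ (g t + g (-t))/2 := by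
    have := hg.2 ht htm (by norm_num : (0:ℝ) ≤ 1/2) (by norm_num : (0:ℝ) ≤ 1/2) (by norm_num)
    simp only [smul_eq_mul] at this
    have h0 : (1:ℝ)/2 * t + 1/2 * (-t) = 0 := by ring
    rw [h0] at this
    linarith
  have hlow : 2 * g 0 - max (g (-(1:ℝ)/2)) (g (1/2)) ≤ g t := by linarith
  rw [abs_le]
  have h1 := neg_abs_le (2 * g 0 - max (g (-(1:ℝ)/2)) (g (1/2)))
  have h2 := abs_nonneg (max (g (-(1:ℝ)/2)) (g (1/2)))
  have h3 := le_abs_self (max (g (-(1:ℝ)/2)) (g (1/2)))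
  have h4 := neg_abs_le (max (g (-(1:ℝ)/2)) (g (1/2)))
  have h5 := abs_nonneg (2 * g 0 - max (g (-(1:ℝ)/2)) (g (1/2)))
  constructor <;> linarith

/-- convex functions are interval integrable, as is any fixed continuous modification -/
lemma convex_intervalIntegrable {g : ℝ → ℝ} (hg : ConvexOn ℝ (Icc (-(1:ℝ)/2) (1/2)) g)
    {F : ℝ → ℝ → ℝ} (hF : Continuous fun p : ℝ × ℝ => F p.1 p.2) :
    IntervalIntegrable (fun t => F (g t) t) volume (-(1:ℝ)/2) (1/2) := by
  obtain ⟨C, hC⟩ := convex_abs_bound hg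
  have hcont : ContinuousOn g (Ioo (-(1:ℝ)/2) (1/2)) := by
    have := hg.continuousOn_interior
    rwa [interior_Icc] at this
  rw [intervalIntegrable_iff_integrableOn_Ioo_of_le (by norm_num)]
  have hmeas : AEStronglyMeasurable (fun t => F (g t) t) (volume.restrict (Ioo (-(1:ℝ)/2) (1/2))) := by
    apply ContinuousOn.aestronglyMeasurable _ measurableSet_Ioo
    exact hF.comp_continuousOn (hcont.prodMk continuousOn_id)
  -- bound
  obtain ⟨D, hD⟩ : ∃ D, ∀ x ∈ Icc (-C) C ×ˢ Icc (-(1:ℝ)/2) (1/2), |F x.1 x.2| ≤ D := by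
    have hcomp : IsCompact (Icc (-C) C ×ˢ Icc (-(1:ℝ)/2) (1/2)) :=
      (isCompact_Icc).prod isCompact_Icc
    obtain ⟨D, hD⟩ := hcomp.exists_bound_of_continuousOn
      ((hF.comp continuous_id).continuousOn)
    exact ⟨D, fun x hx => by simpa using hD x hx⟩
  apply Integrable.mono' (g := fun _ => D) (integrableOn_const measure_Ioo_lt_top.ne)
    hmeas
  filter_upwards [ae_restrict_mem measurableSet_Ioo] with t ht
  have ht' : t ∈ Icc (-(1:ℝ)/2) (1/2) := Ioo_subset_Icc_self ht
  have := hC t ht'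
  have : (g t, t) ∈ Icc (-C) C ×ˢ Icc (-(1:ℝ)/2) (1/2) := by
    constructor
    · rw [mem_Icc]; rw [abs_le] at this; exact this
    · exact ht'
  simpa using hD _ this

end Helpers

/-- slope inequality for convex functions: chords from 0 have increasing slopes -/
lemma slope_fact {g : ℝ → ℝ} (hg : ConvexOn ℝ (Icc (-(1:ℝ)/2) (1/2)) g)
    {s t : ℝ} (hs : 0 < s) (hst : s ≤ t) (ht : t ≤ 1/2) :
    (g s - g 0) * t ≤ (g t - g 0) * s := by
  rcases eq_or_lt_of_le hst with rfl | hlt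
  · exact le_of_eq (by ring)
  · have ht0 : 0 < t := lt_of_lt_of_le hs hst
    have hmem0 : (0:ℝ) ∈ Icc (-(1:ℝ)/2) (1/2) := by norm_num
    have hmemt : t ∈ Icc (-(1:ℝ)/2) (1/2) := by
      rw [mem_Icc]; constructor <;> linarith
    have h1 : (0:ℝ) ≤ 1 - s/t := by
      rw [sub_nonneg, div_le_one ht0]; linarith
    have h2 : (0:ℝ) ≤ s/t := le_of_lt (div_pos hs ht0)
    have hcvx := hg.2 hmem0 hmemt h1 h2 (by ring)
    simp only [smul_eq_mul, mul_zero, zero_add] at hcvx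
    have hst' : s/t * t = s := div_mul_cancel₀ s (ne_of_gt ht0)
    rw [hst'] at hcvx
    have hmul := mul_le_mul_of_nonneg_left hcvx (le_of_lt ht0)
    have hexp : t * ((1 - s/t) * g 0 + s/t * g t) = (t - s) * g 0 + s * g t := by
      field_simp
    rw [hexp] at hmul
    nlinarith

/-- ∫₀ᵇ ((t²-(3b/2)t+b²/2))² dt = b⁵/30 -/
lemma int_w_sq (b : ℝ) :
    (∫ t in (0:ℝ)..b, (t^2 - 3*b/2*t + b^2/2)^2) = b^5/30 := by
  have h : ∀ t ∈ uIcc (0:ℝ) b, HasDerivAt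
      (fun x : ℝ => x^5/5 - 3*b/4*x^4 + 13*b^2/12*x^3 - 3*b^3/4*x^2 + b^4/4*x)
      ((t^2 - 3*b/2*t + b^2/2)^2) t := by
    intro t _
    have h1 := (((((hasDerivAt_pow 5 t).div_const 5).sub
      ((hasDerivAt_pow 4 t).const_mul (3*b/4))).add
      ((hasDerivAt_pow 3 t).const_mul (13*b^2/12))).sub
      ((hasDerivAt_pow 2 t).const_mul (3*b^3/4))).add
      ((hasDerivAt_id t).const_mul (b^4/4))
    refine h1.congr_deriv ?_
    push_cast
    ring
  rw [intervalIntegral.integral_eq_sub_of_hasDerivAt h (Continuous.intervalIntegrable (by continuity) _ _)]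
  ring

/-- ∫₋ᵇ⁰ ((t²+(3b/2)t+b²/2))² dt = b⁵/30 -/
lemma int_w_sq' (b : ℝ) :
    (∫ t in (-b)..(0:ℝ), (t^2 + 3*b/2*t + b^2/2)^2) = b^5/30 := by
  have h : ∀ t ∈ uIcc (-b) (0:ℝ), HasDerivAt
      (fun x : ℝ => x^5/5 + 3*b/4*x^4 + 13*b^2/12*x^3 + 3*b^3/4*x^2 + b^4/4*x)
      ((t^2 + 3*b/2*t + b^2/2)^2) t := by
    intro t _
    have h1 := (((((hasDerivAt_pow 5 t).div_const 5).add
      ((hasDerivAt_pow 4 t).const_mul (3*b/4))).add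
      ((hasDerivAt_pow 3 t).const_mul (13*b^2/12))).add
      ((hasDerivAt_pow 2 t).const_mul (3*b^3/4))).add
      ((hasDerivAt_id t).const_mul (b^4/4))
    refine h1.congr_deriv ?_
    push_cast
    ring
  rw [intervalIntegral.integral_eq_sub_of_hasDerivAt h (Continuous.intervalIntegrable (by continuity) _ _)]
  ring

/-- ∫₀ᵇ (t²-(3b/2)t+b²/2) dt = b³/12 -/
lemma int_w (b : ℝ) :
    (∫ t in (0:ℝ)..b, (t^2 - 3*b/2*t + b^2/2)) = b^3/12 := by
  have h : ∀ t ∈ uIcc (0:ℝ) b, HasDerivAt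
      (fun x : ℝ => x^3/3 - 3*b/4*x^2 + b^2/2*x)
      (t^2 - 3*b/2*t + b^2/2) t := by
    intro t _
    have h1 := (((hasDerivAt_pow 3 t).div_const 3).sub
      ((hasDerivAt_pow 2 t).const_mul (3*b/4))).add
      ((hasDerivAt_id t).const_mul (b^2/2))
    refine h1.congr_deriv ?_
    push_cast
    ring
  rw [intervalIntegral.integral_eq_sub_of_hasDerivAt h (Continuous.intervalIntegrable (by continuity) _ _)]
  ring

/-- ∫₀ᵇ t(t²-(3b/2)t+b²/2) dt = 0 -/
lemma int_tw (b : ℝ) :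
    (∫ t in (0:ℝ)..b, t * (t^2 - 3*b/2*t + b^2/2)) = 0 := by
  have h : ∀ t ∈ uIcc (0:ℝ) b, HasDerivAt
      (fun x : ℝ => x^4/4 - b/2*x^3 + b^2/4*x^2)
      (t * (t^2 - 3*b/2*t + b^2/2)) t := by
    intro t _
    have h1 := (((hasDerivAt_pow 4 t).div_const 4).sub
      ((hasDerivAt_pow 3 t).const_mul (b/2))).add
      ((hasDerivAt_pow 2 t).const_mul (b^2/4))
    refine h1.congr_deriv ?_
    push_cast
    ring
  rw [intervalIntegral.integral_eq_sub_of_hasDerivAt h (Continuous.intervalIntegrable (by continuity) _ _)]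
  ring

/-- ∫₋ₛˢ (s²-t²)² dt = (16/15)s⁵ -/
lemma int_parab (s : ℝ) :
    (∫ t in (-s)..s, (s^2 - t^2)^2) = 16/15*s^5 := by
  have h : ∀ t ∈ uIcc (-s) s, HasDerivAt
      (fun x : ℝ => s^4*x - 2*s^2/3*x^3 + x^5/5)
      ((s^2 - t^2)^2) t := by
    intro t _
    have h1 := (((hasDerivAt_id t).const_mul (s^4)).sub
      ((hasDerivAt_pow 3 t).const_mul (2*s^2/3))).add
      ((hasDerivAt_pow 5 t).div_const 5)
    refine h1.congr_deriv ?_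
    push_cast
    ring
  rw [intervalIntegral.integral_eq_sub_of_hasDerivAt h (Continuous.intervalIntegrable (by continuity) _ _)]
  ring

set_option maxHeartbeats 1000000 in
/-- The key lower bound on a half interval. -/
lemma half_lower {g : ℝ → ℝ} (hg : ConvexOn ℝ (Icc (-(1:ℝ)/2) (1/2)) g)
    {b : ℝ} (hb0 : 0 < b) (hb : b ≤ 1/2) (hg0 : g 0 ≤ -(b^2/2)) :
    b^5/30 + b^3/6 * (-(b^2/2) - g 0) ≤ ∫ t in (0:ℝ)..(1/2), (g t - t^2)^2 := by
  set φ0 : ℝ := -(b^2/2) - g 0 with hφ0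
  have hφ0nn : 0 ≤ φ0 := by simp only [hφ0]; linarith
  set K : ℝ := (4*(3*b^2/4 - (g (b/2) - g 0)))/b with hK
  -- integrability
  have hI : IntervalIntegrable (fun t => (g t - t^2)^2) volume (-(1:ℝ)/2) (1/2) :=
    convex_intervalIntegrable hg (F := fun x t => (x - t^2)^2) (by fun_prop)
  have hsub1 : uIcc (0:ℝ) b ⊆ uIcc (-(1:ℝ)/2) (1/2) :=
    uIcc_subset_uIcc (by rw [mem_uIcc]; left; constructor <;> norm_num)
      (by rw [mem_uIcc]; left; constructor <;> linarith)
  have hsub2 : uIcc b (1/2:ℝ) ⊆ uIcc (-(1:ℝ)/2) (1/2) :=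
    uIcc_subset_uIcc (by rw [mem_uIcc]; left; constructor <;> linarith)
      (by rw [mem_uIcc]; left; constructor <;> norm_num)
  have hI1 : IntervalIntegrable (fun t => (g t - t^2)^2) volume 0 b := hI.mono_set hsub1
  have hI2 : IntervalIntegrable (fun t => (g t - t^2)^2) volume b (1/2) := hI.mono_set hsub2
  -- split the integral
  have hsplit : (∫ t in (0:ℝ)..(1/2), (g t - t^2)^2)
      = (∫ t in (0:ℝ)..b, (g t - t^2)^2) + ∫ t in b..(1/2:ℝ), (g t - t^2)^2 :=
    (intervalIntegral.integral_add_adjacent_intervals hI1 hI2).symm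
  have htail : 0 ≤ ∫ t in b..(1/2:ℝ), (g t - t^2)^2 :=
    intervalIntegral.integral_nonneg hb (fun u _ => by positivity)
  -- pointwise bound on [0, b]
  have hpt : ∀ t ∈ Icc (0:ℝ) b,
      (t^2 - 3*b/2*t + b^2/2)^2 + 2*φ0*(t^2 - 3*b/2*t + b^2/2)
        + K*(t*(t^2 - 3*b/2*t + b^2/2)) ≤ (g t - t^2)^2 := by
    intro t ht
    rw [mem_Icc] at ht
    set w : ℝ := t^2 - 3*b/2*t + b^2/2 with hw
    -- Q : (b/2) * w * (φ t - φ0) - (φ(b/2) - φ0) * t * w ≥ 0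
    have hQ : 0 ≤ (b/2) * (w * (3*b/2*t - (g t - g 0))) - (3*b^2/4 - (g (b/2) - g 0)) * (t * w) := by
      rcases le_or_gt t (b/2) with hc | hc
      · -- w ≥ 0, slope diff ≥ 0
        have hwnn : 0 ≤ w := by rw [hw]; nlinarith
        rcases eq_or_lt_of_le ht.1 with h0 | h0
        · rw [← h0]; simp
        · have hsl := slope_fact hg h0 hc (by linarith)
          have : (b/2) * (w * (3*b/2*t - (g t - g 0))) - (3*b^2/4 - (g (b/2) - g 0)) * (t * w)
              = w * ((g (b/2) - g 0) * t - (g t - g 0) * (b/2)) := by ring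
          rw [this]
          exact mul_nonneg hwnn (by linarith)
      · -- w ≤ 0, slope diff ≤ 0
        have hwnp : w ≤ 0 := by rw [hw]; nlinarith
        have hsl := slope_fact hg (by linarith : (0:ℝ) < b/2) (le_of_lt hc) (by linarith)
        have : (b/2) * (w * (3*b/2*t - (g t - g 0))) - (3*b^2/4 - (g (b/2) - g 0)) * (t * w)
            = w * ((g (b/2) - g 0) * t - (g t - g 0) * (b/2)) := by ring
        rw [this]
        have h2 := mul_nonneg (neg_nonneg.2 hwnp)
          (by linarith : (0:ℝ) ≤ (g t - g 0) * (b/2) - (g (b/2) - g 0) * t)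
        nlinarith [h2]
    -- from Q, the K-term bound
    have hKterm : K*(t*w) ≤ 2*(w*(3*b/2*t - (g t - g 0))) := by
      have hiden : 2*(w*(3*b/2*t - (g t - g 0))) - K*(t*w)
          = (4/b) * ((b/2) * (w * (3*b/2*t - (g t - g 0)))
              - (3*b^2/4 - (g (b/2) - g 0)) * (t * w)) := by
        rw [hK]; field_simp; ring
      nlinarith [mul_nonneg (by positivity : (0:ℝ) ≤ 4/b) hQ]
    -- assemble
    have hiden2 : (g t - t^2)^2 = w^2 + 2*φ0*w + 2*(w*(3*b/2*t - (g t - g 0)))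
        + (3*b/2*t - b^2/2 - g t)^2 := by
      rw [hw, hφ0]; ring
    rw [hiden2]
    linarith [sq_nonneg (3*b/2*t - b^2/2 - g t), hKterm]
  -- integrate the pointwise bound
  have hcont : Continuous fun t : ℝ => (t^2 - 3*b/2*t + b^2/2)^2
      + 2*φ0*(t^2 - 3*b/2*t + b^2/2) + K*(t*(t^2 - 3*b/2*t + b^2/2)) := by fun_prop
  have hmono := intervalIntegral.integral_mono_on (le_of_lt hb0)
    (hcont.intervalIntegrable 0 b) hI1 hpt
  have hval : (∫ t in (0:ℝ)..b, ((t^2 - 3*b/2*t + b^2/2)^2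
      + 2*φ0*(t^2 - 3*b/2*t + b^2/2) + K*(t*(t^2 - 3*b/2*t + b^2/2))))
      = b^5/30 + 2*φ0*(b^3/12) + K*0 := by
    rw [intervalIntegral.integral_add (((by fun_prop : Continuous fun t : ℝ =>
        (t^2 - 3*b/2*t + b^2/2)^2 + 2*φ0*(t^2 - 3*b/2*t + b^2/2))).intervalIntegrable 0 b)
      (((by fun_prop : Continuous fun t : ℝ =>
        K*(t*(t^2 - 3*b/2*t + b^2/2)))).intervalIntegrable 0 b),
      intervalIntegral.integral_add (((by fun_prop : Continuous fun t : ℝ =>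
        (t^2 - 3*b/2*t + b^2/2)^2)).intervalIntegrable 0 b)
      (((by fun_prop : Continuous fun t : ℝ =>
        2*φ0*(t^2 - 3*b/2*t + b^2/2))).intervalIntegrable 0 b),
      intervalIntegral.integral_const_mul, intervalIntegral.integral_const_mul,
      int_w_sq, int_w, int_tw]
  rw [hsplit]
  rw [hval] at hmono
  linarith

/-- reflection of a convex function is convex -/
lemma convex_reflect {g : ℝ → ℝ} (hg : ConvexOn ℝ (Icc (-(1:ℝ)/2) (1/2)) g) :
    ConvexOn ℝ (Icc (-(1:ℝ)/2) (1/2)) (fun t => g (-t)) := by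
  refine ⟨convex_Icc _ _, ?_⟩
  intro x hx y hy a c ha hc hac
  have hx' : -x ∈ Icc (-(1:ℝ)/2) (1/2) := by
    rw [mem_Icc] at hx ⊢; constructor <;> linarith [hx.1, hx.2]
  have hy' : -y ∈ Icc (-(1:ℝ)/2) (1/2) := by
    rw [mem_Icc] at hy ⊢; constructor <;> linarith [hy.1, hy.2]
  have := hg.2 hx' hy' ha hc hac
  simp only [smul_eq_mul] at this ⊢
  have hneg : -(a * x + c * y) = a * (-x) + c * (-y) := by ring
  rw [hneg]
  exact this

set_option maxHeartbeats 1000000 in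
/-- lower bound for the integral when g(0) ≥ s² > 0 -/
lemma upper_pos {g : ℝ → ℝ} (hg : ConvexOn ℝ (Icc (-(1:ℝ)/2) (1/2)) g)
    {s : ℝ} (hs0 : 0 < s) (hs : s ≤ 1/2) (hgs : s^2 ≤ g 0) :
    16/15*s^5 ≤ ∫ t in (-(1:ℝ)/2)..(1/2), (g t - t^2)^2 := by
  have hI : IntervalIntegrable (fun t => (g t - t^2)^2) volume (-(1:ℝ)/2) (1/2) :=
    convex_intervalIntegrable hg (F := fun x t => (x - t^2)^2) (by fun_prop)
  have hIr : IntervalIntegrable (fun t => (g (-t) - t^2)^2) volume (-(1:ℝ)/2) (1/2) := by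
    have := convex_intervalIntegrable (convex_reflect hg)
      (F := fun x t => (x - t^2)^2) (by fun_prop)
    exact this
  have hsubS : uIcc (-s) s ⊆ uIcc (-(1:ℝ)/2) (1/2) :=
    uIcc_subset_uIcc (by rw [uIcc_of_le (by norm_num), mem_Icc]; constructor <;> linarith)
      (by rw [uIcc_of_le (by norm_num), mem_Icc]; constructor <;> linarith)
  have hsub1 : uIcc (-(1:ℝ)/2) (-s) ⊆ uIcc (-(1:ℝ)/2) (1/2) :=
    uIcc_subset_uIcc (by rw [uIcc_of_le (by norm_num), mem_Icc]; norm_num)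
      (by rw [uIcc_of_le (by norm_num), mem_Icc]; constructor <;> linarith)
  have hsub2 : uIcc s (1/2:ℝ) ⊆ uIcc (-(1:ℝ)/2) (1/2) :=
    uIcc_subset_uIcc (by rw [uIcc_of_le (by norm_num), mem_Icc]; constructor <;> linarith)
      (by rw [uIcc_of_le (by norm_num), mem_Icc]; norm_num)
  have hsubM : uIcc (-s) (1/2:ℝ) ⊆ uIcc (-(1:ℝ)/2) (1/2) :=
    uIcc_subset_uIcc (by rw [uIcc_of_le (by norm_num), mem_Icc]; constructor <;> linarith)
      (by rw [uIcc_of_le (by norm_num), mem_Icc]; norm_num)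
  have e1 := intervalIntegral.integral_add_adjacent_intervals
    (hI.mono_set hsubS) (hI.mono_set hsub2)
  have e2 := intervalIntegral.integral_add_adjacent_intervals
    (hI.mono_set hsub1) (hI.mono_set hsubM)
  have hnn1 : 0 ≤ ∫ t in (-(1:ℝ)/2)..(-s), (g t - t^2)^2 :=
    intervalIntegral.integral_nonneg (by linarith) (fun u _ => by positivity)
  have hnn2 : 0 ≤ ∫ t in s..(1/2:ℝ), (g t - t^2)^2 :=
    intervalIntegral.integral_nonneg (by linarith) (fun u _ => by positivity)
  have hres : (∫ t in (-s)..s, (g t - t^2)^2) ≤ ∫ t in (-(1:ℝ)/2)..(1/2), (g t - t^2)^2 := by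
    linarith [e1, e2]
  -- reflection identity
  have hrefl : (∫ t in (-s)..s, (g (-t) - t^2)^2) = ∫ t in (-s)..s, (g t - t^2)^2 := by
    have h := intervalIntegral.integral_comp_neg (a := -s) (b := s)
      (fun x => (g x - x^2)^2)
    simpa [neg_sq] using h
  -- pointwise bound
  have hpt : ∀ t ∈ Icc (-s) s, 2*(s^2 - t^2)^2 ≤ (g t - t^2)^2 + (g (-t) - t^2)^2 := by
    intro t ht
    rw [mem_Icc] at ht
    have htI : t ∈ Icc (-(1:ℝ)/2) (1/2) := by
      rw [mem_Icc]; constructor <;> linarith [ht.1, ht.2]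
    have htI' : -t ∈ Icc (-(1:ℝ)/2) (1/2) := by
      rw [mem_Icc]; constructor <;> linarith [ht.1, ht.2]
    have hmid : g 0 ≤ (g t + g (-t))/2 := by
      have := hg.2 htI htI' (by norm_num : (0:ℝ) ≤ 1/2) (by norm_num : (0:ℝ) ≤ 1/2)
        (by norm_num)
      simp only [smul_eq_mul] at this
      have h0 : (1:ℝ)/2 * t + 1/2 * (-t) = 0 := by ring
      rw [h0] at this
      linarith
    have hd : 0 ≤ 2*(s^2 - t^2) := by nlinarith [ht.1, ht.2]
    have hsum : 2*(s^2 - t^2) ≤ (g t - t^2) + (g (-t) - t^2) := by linarith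
    nlinarith [sq_nonneg ((g t - t^2) - (g (-t) - t^2)),
      mul_self_le_mul_self hd hsum]
  -- integrate
  have hadd : (∫ t in (-s)..s, ((g t - t^2)^2 + (g (-t) - t^2)^2))
      = (∫ t in (-s)..s, (g t - t^2)^2) + ∫ t in (-s)..s, (g (-t) - t^2)^2 :=
    intervalIntegral.integral_add (hI.mono_set hsubS) (hIr.mono_set hsubS)
  have hmono := intervalIntegral.integral_mono_on (by linarith : -s ≤ s)
    (((by fun_prop : Continuous fun t : ℝ => 2*(s^2 - t^2)^2)).intervalIntegrable (-s) s)
    ((hI.mono_set hsubS).add (hIr.mono_set hsubS)) hpt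
  have hval : (∫ t in (-s)..s, 2*(s^2 - t^2)^2) = 2*(16/15*s^5) := by
    rw [intervalIntegral.integral_const_mul, int_parab]
  rw [hval] at hmono
  rw [hadd, hrefl] at hmono
  linarith

/-- the one-sided extremal profile -/
noncomputable def kap (b : ℝ) : ℝ → ℝ := fun u => if u ≤ b then 3*b/2*u - b^2/2 else u^2

/-- the extremal convex function -/
noncomputable def gstar (b : ℝ) : ℝ → ℝ := fun t => kap b |t|

lemma kap_convex {b : ℝ} (hb0 : 0 < b) (hb : b ≤ 1/2) :
    ConvexOn ℝ (Icc (0:ℝ) (1/2)) (kap b) := by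
  apply convexOn_of_slope_mono_adjacent (convex_Icc _ _)
  intro x y z hx hz hxy hyz
  rw [mem_Icc] at hx hz
  rw [div_le_div_iff₀ (by linarith) (by linarith)]
  unfold kap
  rcases le_or_gt y b with hyb | hyb
  · rcases le_or_gt z b with hzb | hzb
    · rw [if_pos (by linarith : x ≤ b), if_pos hyb, if_pos hzb]
      exact le_of_eq (by ring)
    · rw [if_pos (by linarith : x ≤ b), if_pos hyb, if_neg (not_le.2 hzb)]
      nlinarith [mul_nonneg (by linarith : (0:ℝ) ≤ y - x)
        (mul_nonneg (by linarith : (0:ℝ) ≤ z - b) (by linarith : (0:ℝ) ≤ z - b/2))]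
  · rcases le_or_gt x b with hxb | hxb
    · rw [if_pos hxb, if_neg (not_le.2 hyb), if_neg (not_le.2 (by linarith : b < z))]
      have hA : (0:ℝ) ≤ (z+y)*(y-x) - (y^2 - 3*b/2*x + b^2/2) := by
        nlinarith [sq_nonneg (y-b), mul_nonneg (by linarith : (0:ℝ) ≤ b - x)
          (by linarith : (0:ℝ) ≤ 2*y - 3*b/2), mul_nonneg (by linarith : (0:ℝ) ≤ z - y)
          (by linarith : (0:ℝ) ≤ y - x)]
      nlinarith [mul_nonneg (by linarith : (0:ℝ) ≤ z - y) hA]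
    · rw [if_neg (not_le.2 hxb), if_neg (not_le.2 hyb), if_neg (not_le.2 (by linarith : b < z))]
      nlinarith [mul_nonneg (mul_nonneg (by linarith : (0:ℝ) ≤ y - x)
        (by linarith : (0:ℝ) ≤ z - y)) (by linarith : (0:ℝ) ≤ z - x)]

lemma kap_mono {b : ℝ} (hb0 : 0 < b) (hb : b ≤ 1/2) :
    MonotoneOn (kap b) (Icc (0:ℝ) (1/2)) := by
  intro u hu v hv huv
  rw [mem_Icc] at hu hv
  unfold kap
  rcases le_or_gt u b with hub | hub
  · rcases le_or_gt v b with hvb | hvb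
    · rw [if_pos hub, if_pos hvb]; nlinarith
    · rw [if_pos hub, if_neg (not_le.2 hvb)]; nlinarith
  · rw [if_neg (not_le.2 hub), if_neg (not_le.2 (by linarith : b < v))]
    nlinarith

lemma gstar_convex {b : ℝ} (hb0 : 0 < b) (hb : b ≤ 1/2) :
    ConvexOn ℝ (Icc (-(1:ℝ)/2) (1/2)) (gstar b) := by
  refine ⟨convex_Icc _ _, ?_⟩
  intro x hx y hy a c ha hc hac
  rw [mem_Icc] at hx hy
  have hxm : |x| ∈ Icc (0:ℝ) (1/2) := by
    rw [mem_Icc]; exact ⟨abs_nonneg x, abs_le.2 ⟨by linarith [hx.1], by linarith [hx.2]⟩⟩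
  have hym : |y| ∈ Icc (0:ℝ) (1/2) := by
    rw [mem_Icc]; exact ⟨abs_nonneg y, abs_le.2 ⟨by linarith [hy.1], by linarith [hy.2]⟩⟩
  have hcomb : a * |x| + c * |y| ∈ Icc (0:ℝ) (1/2) := by
    rw [mem_Icc]
    constructor
    · positivity
    · have := hxm.2
      have := hym.2
      nlinarith [hxm.2, hym.2]
  have habs : |a • x + c • y| ≤ a * |x| + c * |y| := by
    simp only [smul_eq_mul]
    calc |a * x + c * y| ≤ |a * x| + |c * y| := abs_add_le _ _
      _ = a * |x| + c * |y| := by rw [abs_mul, abs_mul, abs_of_nonneg ha, abs_of_nonneg hc]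
  have habsm : |a • x + c • y| ∈ Icc (0:ℝ) (1/2) := by
    rw [mem_Icc]
    exact ⟨abs_nonneg _, le_trans habs hcomb.2⟩
  calc gstar b (a • x + c • y) = kap b |a • x + c • y| := rfl
    _ ≤ kap b (a * |x| + c * |y|) := kap_mono hb0 hb habsm hcomb habs
    _ ≤ a * kap b |x| + c * kap b |y| := by
        have := (kap_convex hb0 hb).2 hxm hym ha hc hac
        simpa using this
    _ = a • gstar b x + c • gstar b y := by simp [gstar, smul_eq_mul]

lemma gstar_zero {b : ℝ} (hb0 : 0 ≤ b) : gstar b 0 = -(b^2/2) := by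
  simp [gstar, kap, abs_of_nonneg (le_refl (0:ℝ)), hb0]

set_option maxHeartbeats 1000000 in
lemma gstar_integral {b : ℝ} (hb0 : 0 < b) (hb : b ≤ 1/2) :
    (∫ t in (-(1:ℝ)/2)..(1/2), (gstar b t - t^2)^2) = b^5/15 := by
  have hI : IntervalIntegrable (fun t => (gstar b t - t^2)^2) volume (-(1:ℝ)/2) (1/2) :=
    convex_intervalIntegrable (gstar_convex hb0 hb) (F := fun x t => (x - t^2)^2) (by fun_prop)
  have m1 : uIcc (-(1:ℝ)/2) (-b) ⊆ uIcc (-(1:ℝ)/2) (1/2) :=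
    uIcc_subset_uIcc (by rw [uIcc_of_le (by norm_num), mem_Icc]; norm_num)
      (by rw [uIcc_of_le (by norm_num), mem_Icc]; constructor <;> linarith)
  have m2 : uIcc (-b) (0:ℝ) ⊆ uIcc (-(1:ℝ)/2) (1/2) :=
    uIcc_subset_uIcc (by rw [uIcc_of_le (by norm_num), mem_Icc]; constructor <;> linarith)
      (by rw [uIcc_of_le (by norm_num), mem_Icc]; norm_num)
  have m3 : uIcc (0:ℝ) b ⊆ uIcc (-(1:ℝ)/2) (1/2) :=
    uIcc_subset_uIcc (by rw [uIcc_of_le (by norm_num), mem_Icc]; norm_num)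
      (by rw [uIcc_of_le (by norm_num), mem_Icc]; constructor <;> linarith)
  have m4 : uIcc b (1/2:ℝ) ⊆ uIcc (-(1:ℝ)/2) (1/2) :=
    uIcc_subset_uIcc (by rw [uIcc_of_le (by norm_num), mem_Icc]; constructor <;> linarith)
      (by rw [uIcc_of_le (by norm_num), mem_Icc]; norm_num)
  have m34 : uIcc (0:ℝ) (1/2) ⊆ uIcc (-(1:ℝ)/2) (1/2) :=
    uIcc_subset_uIcc (by rw [uIcc_of_le (by norm_num), mem_Icc]; norm_num)
      (by rw [uIcc_of_le (by norm_num), mem_Icc]; norm_num)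
  have m234 : uIcc (-b) (1/2:ℝ) ⊆ uIcc (-(1:ℝ)/2) (1/2) :=
    uIcc_subset_uIcc (by rw [uIcc_of_le (by norm_num), mem_Icc]; constructor <;> linarith)
      (by rw [uIcc_of_le (by norm_num), mem_Icc]; norm_num)
  have e34 := intervalIntegral.integral_add_adjacent_intervals
    (hI.mono_set m3) (hI.mono_set m4)
  have e234 := intervalIntegral.integral_add_adjacent_intervals
    (hI.mono_set m2) (hI.mono_set m34)
  have e1234 := intervalIntegral.integral_add_adjacent_intervals
    (hI.mono_set m1) (hI.mono_set m234)
  -- piece values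
  have p1 : (∫ t in (-(1:ℝ)/2)..(-b), (gstar b t - t^2)^2) = 0 := by
    rw [intervalIntegral.integral_congr (g := fun _ => (0:ℝ)) ?_, intervalIntegral.integral_const]
    · simp
    · intro t ht
      rw [uIcc_of_le (by linarith), mem_Icc] at ht
      have htb : t ≤ -b := ht.2
      simp only [gstar, kap]
      rcases lt_or_eq_of_le htb with hlt | heq
      · rw [if_neg]
        · simp [sq_abs]
        · push_neg
          rw [abs_of_nonpos (by linarith)]
          linarith
      · rw [heq, abs_of_nonpos (by linarith), if_pos (by linarith)]
        norm_num
        nlinarith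
  have p4 : (∫ t in b..(1/2:ℝ), (gstar b t - t^2)^2) = 0 := by
    rw [intervalIntegral.integral_congr (g := fun _ => (0:ℝ)) ?_, intervalIntegral.integral_const]
    · simp
    · intro t ht
      rw [uIcc_of_le (by linarith), mem_Icc] at ht
      simp only [gstar, kap]
      rcases lt_or_eq_of_le ht.1 with hlt | heq
      · rw [if_neg]
        · simp [sq_abs]
        · push_neg
          rw [abs_of_nonneg (by linarith)]
          linarith
      · rw [← heq, abs_of_nonneg (by linarith), if_pos (le_refl b)]
        norm_num
        nlinarith
  have p2 : (∫ t in (-b)..(0:ℝ), (gstar b t - t^2)^2) = b^5/30 := by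
    rw [intervalIntegral.integral_congr (g := fun t => (t^2 + 3*b/2*t + b^2/2)^2) ?_, int_w_sq']
    intro t ht
    rw [uIcc_of_le (by linarith), mem_Icc] at ht
    simp only [gstar, kap]
    rw [abs_of_nonpos ht.2, if_pos (by linarith)]
    ring
  have p3 : (∫ t in (0:ℝ)..b, (gstar b t - t^2)^2) = b^5/30 := by
    rw [intervalIntegral.integral_congr (g := fun t => (t^2 - 3*b/2*t + b^2/2)^2) ?_, int_w_sq]
    intro t ht
    rw [uIcc_of_le (by linarith), mem_Icc] at ht
    simp only [gstar, kap]
    rw [abs_of_nonneg ht.1, if_pos ht.2]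
    ring
  rw [← e1234, ← e234, ← e34, p1, p2, p3, p4]
  ring


set_option maxHeartbeats 2000000 in
/-- Example 4 of Cai, Low and Xia (2013): for `f t = t²` and `ε² ≤ 1/480`, the local modulus
over the convex class equals `(15^{2/5}/2) ε^{4/5}`. -/
theorem modulus_square_convex (ε : ℝ) (hε : 0 < ε) (hε2 : ε^2 ≤ 1/480) :
    omegaConvex ε (fun t => t^2) = (15 ^ ((2:ℝ)/5) / 2) * ε ^ ((4:ℝ)/5) := by
  set b : ℝ := (15*ε^2) ^ ((1:ℝ)/5) with hbdef
  have hb0 : 0 < b := Real.rpow_pos_of_pos (by positivity) _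
  have hb5 : b^5 = 15*ε^2 := by
    rw [hbdef, ← Real.rpow_natCast ((15*ε^2) ^ ((1:ℝ)/5)) 5, ← Real.rpow_mul (by positivity)]
    norm_num
  have hεsq : ε^2 = b^5/15 := by rw [hb5]; ring
  have hb : b ≤ 1/2 := by
    by_contra hcon
    push_neg at hcon
    have h2 : (1/2:ℝ)^5 < b^5 := by
      apply pow_lt_pow_left₀ hcon (by norm_num)
      norm_num
    rw [hb5] at h2
    norm_num at h2
    linarith
  have hRHS : (15:ℝ) ^ ((2:ℝ)/5) / 2 * ε ^ ((4:ℝ)/5) = b^2/2 := by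
    rw [hbdef, ← Real.rpow_natCast ((15*ε^2) ^ ((1:ℝ)/5)) 2, ← Real.rpow_mul (by positivity),
      Real.mul_rpow (by norm_num) (by positivity),
      ← Real.rpow_natCast ε 2, ← Real.rpow_mul (le_of_lt hε)]
    norm_num
    ring
  rw [hRHS]
  -- the upper bound for every admissible g
  have hub : ∀ d ∈ {d : ℝ | ∃ g : ℝ → ℝ, ConvexOn ℝ (Set.Icc (-(1:ℝ)/2) (1/2)) g ∧
      (∫ t in (-(1:ℝ)/2)..(1/2), (g t - (fun t : ℝ => t^2) t)^2) ≤ ε^2 ∧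
      d = |g 0 - (fun t : ℝ => t^2) 0|}, d ≤ b^2/2 := by
    rintro d ⟨g, hgc, hgint, rfl⟩
    simp only at hgint
    simp only
    rw [show (0:ℝ)^2 = 0 by norm_num, sub_zero]
    by_contra hcon
    push_neg at hcon
    -- integrability and splitting of the total integral
    have hI : IntervalIntegrable (fun t => (g t - t^2)^2) volume (-(1:ℝ)/2) (1/2) :=
      convex_intervalIntegrable hgc (F := fun x t => (x - t^2)^2) (by fun_prop)
    have mneg : uIcc (-(1:ℝ)/2) (0:ℝ) ⊆ uIcc (-(1:ℝ)/2) (1/2) :=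
      uIcc_subset_uIcc (by rw [uIcc_of_le (by norm_num), mem_Icc]; norm_num)
        (by rw [uIcc_of_le (by norm_num), mem_Icc]; norm_num)
    have mpos : uIcc (0:ℝ) (1/2:ℝ) ⊆ uIcc (-(1:ℝ)/2) (1/2) :=
      uIcc_subset_uIcc (by rw [uIcc_of_le (by norm_num), mem_Icc]; norm_num)
        (by rw [uIcc_of_le (by norm_num), mem_Icc]; norm_num)
    have hsplit := intervalIntegral.integral_add_adjacent_intervals
      (hI.mono_set mneg) (hI.mono_set mpos)
    -- reflected function
    have hgrc := convex_reflect hgc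
    have hrefl : (∫ t in (0:ℝ)..(1/2), (g (-t) - t^2)^2)
        = ∫ t in (-(1:ℝ)/2)..(0:ℝ), (g t - t^2)^2 := by
      have h := intervalIntegral.integral_comp_neg (a := (0:ℝ)) (b := (1/2:ℝ))
        (fun x => (g x - x^2)^2)
      simp only [neg_sq, neg_zero] at h
      rw [show (-(1/2:ℝ)) = -1/2 by norm_num] at h
      exact h
    rcases le_or_gt (g 0) 0 with hneg | hpos
    · -- g 0 is very negative
      rw [abs_of_nonpos hneg] at hcon
      set a0 : ℝ := min (-g 0) (1/8) with ha0def
      have ha0pos : 0 < a0 := by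
        rw [ha0def, lt_min_iff]
        constructor
        · nlinarith
        · norm_num
      set b0 : ℝ := Real.sqrt (2*a0) with hb0def
      have hb0sq : b0^2 = 2*a0 := Real.sq_sqrt (by linarith)
      have hb0pos : 0 < b0 := Real.sqrt_pos.2 (by linarith)
      have hb0le : b0 ≤ 1/2 := by
        have h1 : a0 ≤ 1/8 := min_le_right _ _
        nlinarith
      have hg0le : g 0 ≤ -(b0^2/2) := by
        have h1 : a0 ≤ -g 0 := min_le_left _ _
        rw [hb0sq]
        linarith
      have hhalf1 := half_lower hgc hb0pos hb0le hg0le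
      have hg0r : (fun t => g (-t)) 0 = g 0 := by norm_num
      have hhalf2 := half_lower hgrc hb0pos hb0le (by simpa using hg0le)
      simp only [neg_zero] at hhalf2
      rw [hrefl] at hhalf2
      have htot : b0^5/15 + b0^3/3 * (-(b0^2/2) - g 0) ≤ ε^2 := by
        rw [← hsplit] at hgint
        linarith
      rcases le_or_gt (-g 0) (1/8) with hsmall | hbig
      · have ha0eq : a0 = -g 0 := min_eq_left hsmall
        have hterm : -(b0^2/2) - g 0 = 0 := by rw [hb0sq, ha0eq]; ring
        have hbb : b < b0 := by nlinarith
        have hb5lt : b^5 < b0^5 := by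
          apply pow_lt_pow_left₀ hbb (le_of_lt hb0)
          norm_num
        rw [hterm] at htot
        rw [hεsq] at htot
        linarith
      · have ha0eq : a0 = 1/8 := min_eq_right (by linarith)
        have hb0eq : b0 = 1/2 := by
          rw [hb0def, ha0eq, show (2*(1/8:ℝ)) = (1/2)^2 by norm_num,
            Real.sqrt_sq (by norm_num)]
        rw [hb0eq] at htot
        norm_num at htot
        linarith
    · -- g 0 is very positive
      rw [abs_of_pos hpos] at hcon
      set s : ℝ := Real.sqrt (min (g 0) (1/8)) with hsdef
      have hminpos : 0 < min (g 0) (1/8) := by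
        rw [lt_min_iff]
        constructor
        · exact hpos
        · norm_num
      have hs2 : s^2 = min (g 0) (1/8) := Real.sq_sqrt (le_of_lt hminpos)
      have hs0 : 0 < s := Real.sqrt_pos.2 hminpos
      have hsle : s ≤ 1/2 := by
        have h1 : min (g 0) (1/8) ≤ 1/8 := min_le_right _ _
        nlinarith
      have hgs : s^2 ≤ g 0 := by rw [hs2]; exact min_le_left _ _
      have hup := upper_pos hgc hs0 hsle hgs
      have hkey : b^5 < 16*s^5 := by
        have hs5pos : 0 < s^5 := by positivity
        have hb5pos : 0 < b^5 := by positivity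
        apply lt_of_pow_lt_pow_left₀ 2 (by positivity)
        rcases le_or_gt (g 0) (1/8) with hsm | hbg
        · have : s^2 = g 0 := by rw [hs2, min_eq_left hsm]
          have hb2 : b^2 < 2*s^2 := by rw [this]; nlinarith
          have h10 : (b^2)^5 < (2*s^2)^5 := by
            apply pow_lt_pow_left₀ hb2 (sq_nonneg b)
            norm_num
          nlinarith [h10]
        · have hseq : s^2 = 1/8 := by rw [hs2, min_eq_right (le_of_lt hbg)]
          have h4 : ε^2*ε^2 ≤ (1/480)*(1/480) := by nlinarith [sq_nonneg ε]
          have hb10 : (b^5)^2 = 225*(ε^2*ε^2) := by rw [hb5]; ring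
          have hs10 : (16*s^5)^2 = 256*((s^2)^5) := by ring
          rw [hb10, hs10, hseq]
          norm_num
          linarith
      rw [hεsq] at hgint
      linarith
  -- attainment by the extremal function
  have hmem : b^2/2 ∈ {d : ℝ | ∃ g : ℝ → ℝ, ConvexOn ℝ (Set.Icc (-(1:ℝ)/2) (1/2)) g ∧
      (∫ t in (-(1:ℝ)/2)..(1/2), (g t - (fun t : ℝ => t^2) t)^2) ≤ ε^2 ∧
      d = |g 0 - (fun t : ℝ => t^2) 0|} := by
    refine ⟨gstar b, gstar_convex hb0 hb, ?_, ?_⟩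
    · simp only
      rw [gstar_integral hb0 hb, hεsq]
    · simp only
      rw [show (0:ℝ)^2 = 0 by norm_num, sub_zero, gstar_zero (le_of_lt hb0),
        abs_of_nonpos (neg_nonpos.2 (by positivity : (0:ℝ) ≤ b^2/2))]
      ring
  -- conclude
  unfold omegaConvex
  exact le_antisymm (csSup_le ⟨b^2/2, hmem⟩ hub) (le_csSup ⟨b^2/2, hub⟩ hmem)
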